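/- Let $\xi \sim \mathcal{N}(m, \sigma^2)$ with $\sigma > 0$. Then there exists a universal constant $c > 0$ such that for all $\epsilon > 0$, $\mathbb{P}(\xi \in [0,\epsilon]) - \mathbb{P}(\xi \in [-\epsilon, 0]) \le c\, \epsilon^2/\sigma^2$. -/

import Mathlib

open MeasureTheory ProbabilityTheory Real
open scoped ENNReal NNReal RealInnerProductSpace

noncomputable section

/-- Identify a plain vector with a point of Euclidean space. -/
def toEuc {p : ℕ} (v : Fin p → ℝ) : EuclideanSpace ℝ (Fin p) :=
  (EuclideanSpace.equiv (Fin p) ℝ).symm v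

/-- Standard Gaussian measure `N(0, I_p)` on `ℝ^p`. -/
def stdGaussian (p : ℕ) : Measure (EuclideanSpace ℝ (Fin p)) :=
  (Measure.pi (fun _ : Fin p => gaussianReal 0 1)).map toEuc

/-- The former `Matrix.PosSemidef.sqrt`, spelled out with its old definition. -/
def psdSqrt {p : ℕ} {C : Matrix (Fin p) (Fin p) ℝ} (hC : C.PosSemidef) :
    Matrix (Fin p) (Fin p) ℝ :=
  hC.1.eigenvectorUnitary.1 * Matrix.diagonal ((↑) ∘ (√·) ∘ hC.1.eigenvalues) *
    (star hC.1.eigenvectorUnitary : Matrix (Fin p) (Fin p) ℝ)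

/-- Gaussian measure `N(μ, C)` on `ℝ^p`, as the image of the standard Gaussian
under `x ↦ μ + C^{1/2} x`. -/
def gaussianE {p : ℕ} (μ : EuclideanSpace ℝ (Fin p)) (C : Matrix (Fin p) (Fin p) ℝ)
    (hC : C.PosSemidef) : Measure (EuclideanSpace ℝ (Fin p)) :=
  (stdGaussian p).map (fun x => μ + toEuc ((psdSqrt hC).mulVec (fun i => x i)))

/-- Misclassification risk under uniform prior. -/
def risk {p : ℕ} (P0 P1 : Measure (EuclideanSpace ℝ (Fin p)))
    (g : EuclideanSpace ℝ (Fin p) → Bool) : ℝ :=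
  (1/2) * ((P1 {x | g x ≠ true}).toReal + (P0 {x | g x ≠ false}).toReal)

/-- Standard normal cumulative distribution function. -/
def Phi (x : ℝ) : ℝ := ((gaussianReal 0 1) (Set.Iic x)).toReal

/-- `F_{10} = C^{-1}(μ₁ - μ₀)`. -/
def F10 {p : ℕ} (μ0 μ1 : EuclideanSpace ℝ (Fin p)) (C : Matrix (Fin p) (Fin p) ℝ) :
    EuclideanSpace ℝ (Fin p) :=
  toEuc (C⁻¹.mulVec (fun i => μ1 i - μ0 i))

/-- `s_{10} = (μ₁ + μ₀)/2`. -/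
def s10 {p : ℕ} (μ0 μ1 : EuclideanSpace ℝ (Fin p)) : EuclideanSpace ℝ (Fin p) :=
  (2 : ℝ)⁻¹ • (μ1 + μ0)

/-- The Fisher/Bayes linear discriminant rule. -/
def bayes {p : ℕ} (μ0 μ1 : EuclideanSpace ℝ (Fin p)) (C : Matrix (Fin p) (Fin p) ℝ) :
    EuclideanSpace ℝ (Fin p) → Bool :=
  fun x => decide (0 ≤ ⟪F10 μ0 μ1 C, x - s10 μ0 μ1⟫)

/-- Multiplication of a vector by `C^{1/2}` (i.e. the `L₂(P_C)` geometry). -/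
def sqrtMul {p : ℕ} (C : Matrix (Fin p) (Fin p) ℝ) (hC : C.PosSemidef)
    (v : EuclideanSpace ℝ (Fin p)) : EuclideanSpace ℝ (Fin p) :=
  toEuc ((psdSqrt hC).mulVec (fun i => v i))

lemma aux1 (σ m x : ℝ) (hσ : 0 < σ) (hx : 0 ≤ x) (hm : 0 ≤ m) :
    m * Real.exp (-(x - m)^2 / (2 * σ^2)) ≤ x + σ * Real.exp (-(1/2)) := by
  rcases le_or_gt m x with h | h
  · have h1 : Real.exp (-(x - m)^2 / (2 * σ^2)) ≤ 1 := by
      rw [Real.exp_le_one_iff]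
      have h2 : (0:ℝ) < 2 * σ^2 := by positivity
      exact div_nonpos_of_nonpos_of_nonneg (by nlinarith [sq_nonneg (x - m)]) h2.le
    nlinarith [Real.exp_pos (-(1/2:ℝ))]
  · set u := (m - x) / σ with hu
    have hu0 : 0 < u := div_pos (by linarith) hσ
    have hmu : m = x + σ * u := by
      rw [hu, mul_div_assoc', mul_comm σ, mul_div_assoc, div_self hσ.ne', mul_one]; ring
    have hexp : -(x - m)^2 / (2 * σ^2) = -(u^2/2) := by
      rw [hmu]; field_simp; ring
    rw [hexp, hmu]
    have h1 : Real.exp (-(u^2/2)) ≤ 1 := by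
      rw [Real.exp_le_one_iff]; nlinarith [sq_nonneg u]
    have h2 : u * Real.exp (-(u^2/2)) ≤ Real.exp (-(1/2)) := by
      have h3 : (u^2 - 1)/2 + 1 ≤ Real.exp ((u^2 - 1)/2) := Real.add_one_le_exp _
      have h4 : Real.exp (-(1/2:ℝ)) = Real.exp (-(u^2/2)) * Real.exp ((u^2-1)/2) := by
        rw [← Real.exp_add]; ring_nf
      rw [h4]
      have h5 : u ≤ Real.exp ((u^2-1)/2) := by nlinarith [sq_nonneg (u - 1)]
      nlinarith [Real.exp_pos (-(u^2/2))]
    nlinarith [Real.exp_pos (-(u^2/2))]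

lemma aux2 (σ m x : ℝ) (hσ : 0 < σ) (hx : 0 ≤ x) :
    gaussianPDFReal m ((σ^2).toNNReal) x - gaussianPDFReal m ((σ^2).toNNReal) (-x)
      ≤ (Real.sqrt (2*π) * σ)⁻¹ * (2/σ^2) * (x^2 + σ * Real.exp (-(1/2)) * x) := by
  have hv : (((σ^2).toNNReal) : ℝ) = σ^2 := Real.coe_toNNReal _ (by positivity)
  have hπ : 0 < Real.sqrt (2*π) := Real.sqrt_pos.mpr (by positivity)
  have hsq : Real.sqrt (2 * π * σ^2) = Real.sqrt (2*π) * σ := by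
    rw [Real.sqrt_mul (by positivity), Real.sqrt_sq hσ.le]
  simp only [gaussianPDFReal, hv, hsq]
  set K : ℝ := (Real.sqrt (2*π) * σ)⁻¹ with hK
  have hKpos : 0 < K := by positivity
  rcases lt_or_ge m 0 with hm | hm
  · have h1 : Real.exp (-(x-m)^2/(2*σ^2)) ≤ Real.exp (-(-x-m)^2/(2*σ^2)) := by
      apply Real.exp_le_exp.mpr
      rw [div_le_div_iff_of_pos_right (by positivity : (0:ℝ) < 2*σ^2)]
      nlinarith
    have hR : 0 ≤ K * (2/σ^2) * (x^2 + σ * Real.exp (-(1/2)) * x) := by positivity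
    nlinarith
  · have hba : Real.exp (-(x-m)^2/(2*σ^2)) - Real.exp (-(-x-m)^2/(2*σ^2))
        ≤ Real.exp (-(x-m)^2/(2*σ^2)) * (2*x*m/σ^2) := by
      have h1 : Real.exp (-(-x-m)^2/(2*σ^2))
          = Real.exp (-(x-m)^2/(2*σ^2)) * Real.exp (-(2*x*m/σ^2)) := by
        rw [← Real.exp_add]; congr 1; field_simp; ring
      rw [h1]
      have h2 : 1 - (2*x*m/σ^2) ≤ Real.exp (-(2*x*m/σ^2)) := by
        have := Real.add_one_le_exp (-(2*x*m/σ^2)); linarith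
      nlinarith [Real.exp_pos (-(x-m)^2/(2*σ^2))]
    have h3 := aux1 σ m x hσ hx hm
    calc K * Real.exp (-(x-m)^2/(2*σ^2)) - K * Real.exp (-(-x-m)^2/(2*σ^2))
        = K * (Real.exp (-(x-m)^2/(2*σ^2)) - Real.exp (-(-x-m)^2/(2*σ^2))) := by ring
      _ ≤ K * (Real.exp (-(x-m)^2/(2*σ^2)) * (2*x*m/σ^2)) :=
          mul_le_mul_of_nonneg_left hba hKpos.le
      _ = K * (2*x/σ^2) * (m * Real.exp (-(x-m)^2/(2*σ^2))) := by ring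
      _ ≤ K * (2*x/σ^2) * (x + σ * Real.exp (-(1/2))) :=
          mul_le_mul_of_nonneg_left h3 (by positivity)
      _ = K * (2/σ^2) * (x^2 + σ * Real.exp (-(1/2)) * x) := by ring

/-- Lemma 1: if `ξ ~ N(m, σ²)` with `σ > 0`, there is a universal `c > 0` with
`P(ξ ∈ [0,ε]) - P(ξ ∈ [-ε,0]) ≤ c ε²/σ²` for all `ε > 0`. -/
theorem stmt1 :
    ∃ c > (0 : ℝ), ∀ (m σ : ℝ), 0 < σ → ∀ ε > (0 : ℝ),
      ((gaussianReal m ((σ ^ 2).toNNReal)) (Set.Icc 0 ε)).toReal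
        - ((gaussianReal m ((σ ^ 2).toNNReal)) (Set.Icc (-ε) 0)).toReal
      ≤ c * ε ^ 2 / σ ^ 2 := by
  refine ⟨1, one_pos, ?_⟩
  intro m σ hσ ε hε
  have hv : (σ^2).toNNReal ≠ 0 := by
    simp only [ne_eq, Real.toNNReal_eq_zero, not_le]
    positivity
  rcases le_or_gt σ ε with hcase | hcase
  · -- trivial case ε ≥ σ
    have h1 : ((gaussianReal m ((σ^2).toNNReal)) (Set.Icc 0 ε)).toReal ≤ 1 := by
      calc ((gaussianReal m ((σ^2).toNNReal)) (Set.Icc 0 ε)).toReal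
          ≤ (1 : ℝ≥0∞).toReal := ENNReal.toReal_mono ENNReal.one_ne_top prob_le_one
        _ = 1 := ENNReal.toReal_one
    have h2 : (0:ℝ) ≤ ((gaussianReal m ((σ^2).toNNReal)) (Set.Icc (-ε) 0)).toReal :=
      ENNReal.toReal_nonneg
    have h3 : (1:ℝ) ≤ 1 * ε^2 / σ^2 := by
      rw [one_mul, le_div_iff₀ (by positivity)]
      nlinarith
    linarith
  · -- main case ε < σ
    set f := gaussianPDFReal m ((σ^2).toNNReal) with hf
    have hInt : Integrable f := integrable_gaussianPDFReal m _
    have hInt2 : Integrable (fun x => f (-x)) := hInt.comp_neg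
    have hnn : ∀ s : Set ℝ, 0 ≤ ∫ x in s, f x := fun s =>
      integral_nonneg fun x => gaussianPDFReal_nonneg m _ x
    have hIcc1 : ((gaussianReal m ((σ^2).toNNReal)) (Set.Icc 0 ε)).toReal
        = ∫ x in (0:ℝ)..ε, f x := by
      rw [gaussianReal_apply_eq_integral m hv, ENNReal.toReal_ofReal (hnn _),
        intervalIntegral.integral_of_le hε.le, ← integral_Icc_eq_integral_Ioc]
    have hIcc2 : ((gaussianReal m ((σ^2).toNNReal)) (Set.Icc (-ε) 0)).toReal
        = ∫ x in (0:ℝ)..ε, f (-x) := by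
      rw [gaussianReal_apply_eq_integral m hv, ENNReal.toReal_ofReal (hnn _)]
      have h4 : ∫ x in (0:ℝ)..ε, f (-x) = ∫ x in (-ε:ℝ)..(0:ℝ), f x := by
        rw [intervalIntegral.integral_comp_neg f]; norm_num
      rw [h4, intervalIntegral.integral_of_le (by linarith), ← integral_Icc_eq_integral_Ioc]
    rw [hIcc1, hIcc2, ← intervalIntegral.integral_sub hInt.intervalIntegrable
      hInt2.intervalIntegrable]
    have hmono : (∫ x in (0:ℝ)..ε, (f x - f (-x)))
        ≤ ∫ x in (0:ℝ)..ε, ((Real.sqrt (2*π) * σ)⁻¹ * (2/σ^2)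
            * (x^2 + σ * Real.exp (-(1/2)) * x)) := by
      apply intervalIntegral.integral_mono_on hε.le
        ((hInt.sub hInt2).intervalIntegrable)
        (Continuous.intervalIntegrable (by continuity) _ _)
      intro x hx
      exact aux2 σ m x hσ hx.1
    have hcalc : (∫ x in (0:ℝ)..ε, ((Real.sqrt (2*π) * σ)⁻¹ * (2/σ^2)
            * (x^2 + σ * Real.exp (-(1/2)) * x)))
        = (Real.sqrt (2*π) * σ)⁻¹ * (2/σ^2) * (ε^3/3 + σ * Real.exp (-(1/2)) * (ε^2/2)) := by
      rw [intervalIntegral.integral_const_mul]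
      congr 1
      rw [intervalIntegral.integral_add (Continuous.intervalIntegrable (by continuity) _ _)
        (Continuous.intervalIntegrable (by continuity) _ _),
        integral_pow, intervalIntegral.integral_const_mul, integral_id]
      norm_num
    have hs : (2:ℝ) ≤ Real.sqrt (2*π) := by
      have h4 : (2:ℝ) = Real.sqrt 4 := by
        rw [show (4:ℝ) = 2^2 by norm_num, Real.sqrt_sq (by norm_num : (0:ℝ) ≤ 2)]
      rw [h4]
      exact Real.sqrt_le_sqrt (by nlinarith [Real.pi_gt_three])
    have he : Real.exp (-(1/2:ℝ)) ≤ 1 := by rw [Real.exp_le_one_iff]; norm_num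
    have hepos := Real.exp_pos (-(1/2:ℝ))
    have hπ : (0:ℝ) < Real.sqrt (2*π) := by linarith
    have hfinal : (Real.sqrt (2*π) * σ)⁻¹ * (2/σ^2) * (ε^3/3 + σ * Real.exp (-(1/2)) * (ε^2/2))
        ≤ 1 * ε^2 / σ^2 := by
      set s := Real.sqrt (2*π)
      set E := Real.exp (-(1/2:ℝ))
      have hex : (s * σ)⁻¹ * (2/σ^2) * (ε^3/3 + σ * E * (ε^2/2))
          = (2*ε^3/3 + E*σ*ε^2) / (s*σ^3) := by
        field_simp
      rw [hex, one_mul, div_le_div_iff₀ (by positivity) (by positivity)]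
      nlinarith [mul_pos (mul_pos hε hε) (mul_pos hσ hσ),
        mul_nonneg (mul_nonneg (sub_nonneg.mpr hcase.le) (sq_nonneg ε)) (sq_nonneg σ),
        mul_nonneg (mul_nonneg (sub_nonneg.mpr hs) (sq_nonneg ε)) (pow_nonneg hσ.le 3),
        mul_nonneg (mul_nonneg (sub_nonneg.mpr he) (sq_nonneg ε)) (pow_nonneg hσ.le 3)]
    calc (∫ x in (0:ℝ)..ε, (f x - f (-x))) ≤ _ := hmono
      _ = _ := hcalc
      _ ≤ 1 * ε^2 / σ^2 := hfinal
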